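/- Let s ∈ (1/2, 2]. Define the infinite matrix Â by Â_{mn} = m^{s−1}·n^{−s} if n ≥ m and Â_{mn} = m^{−1} if m > n (for m,n ≥ 1; the two formulas agree when m = n). Then Â defines a bounded operator on ℓ²: there exists C > 0 such that for every finitely supported sequence (x_n)_{n≥1} of nonnegative reals, ∑_{m≥1} ( ∑_{n≥1} Â_{mn} x_n )² ≤ C · ∑_{n≥1} x_n². -/

import Mathlib

open Finset Real

lemma one_le_cast_succ (n : ℕ) : (1:ℝ) ≤ (n:ℝ) + 1 := by
  have h : (0:ℝ) ≤ (n:ℝ) := Nat.cast_nonneg n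
  linarith

/-- Bernoulli-type: for `r > 0`, `1 ≤ x`: `1 + r/(x+1) ≤ ((x+1)/x)^r`. -/
lemma bern_aux {r x : ℝ} (hr : 0 < r) (hx : 1 ≤ x) :
    1 + r / (x + 1) ≤ ((x + 1) / x) ^ r := by
  have hx0 : 0 < x := lt_of_lt_of_le one_pos hx
  have hx1 : 0 < x + 1 := by linarith
  have hdiv : (x + 1) / x = 1 + 1 / x := by field_simp
  have h1x : (0:ℝ) < 1 / x := by positivity
  rcases le_or_gt 1 r with h1 | h1
  · calc 1 + r / (x + 1) ≤ 1 + r * (1 / x) := by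
          rw [mul_one_div]; gcongr; linarith
      _ ≤ (1 + 1 / x) ^ r := one_add_mul_self_le_rpow_one_add (by linarith) h1
      _ = ((x + 1) / x) ^ r := by rw [hdiv]
  · have hs : (-1 : ℝ) ≤ -(1 / (x + 1)) := by
      rw [neg_le_neg_iff, div_le_one hx1]; linarith
    have hb := rpow_one_add_le_one_add_mul_self hs hr.le h1.le
    have hxx : 1 + -(1 / (x + 1)) = x / (x + 1) := by field_simp; ring
    rw [hxx, mul_neg, mul_one_div] at hb
    have hu : r / (x + 1) < 1 := by rw [div_lt_one hx1]; linarith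
    have hb' : (x / (x + 1)) ^ r ≤ 1 - r / (x + 1) := by linarith
    have key : (1 + r / (x + 1)) * (x / (x + 1)) ^ r ≤ 1 := by
      calc (1 + r / (x + 1)) * (x / (x + 1)) ^ r
          ≤ (1 + r / (x + 1)) * (1 - r / (x + 1)) :=
            mul_le_mul_of_nonneg_left hb' (by positivity)
        _ = 1 - (r / (x + 1)) ^ 2 := by ring
        _ ≤ 1 := by nlinarith [sq_nonneg (r / (x + 1))]
    have hmul : (x / (x + 1)) ^ r * ((x + 1) / x) ^ r = 1 := by
      rw [← Real.mul_rpow (by positivity) (by positivity),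
        show x / (x + 1) * ((x + 1) / x) = 1 by field_simp]
      exact Real.one_rpow r
    calc 1 + r / (x + 1)
        = ((1 + r / (x + 1)) * (x / (x + 1)) ^ r) * ((x + 1) / x) ^ r := by
          rw [mul_assoc, hmul, mul_one]
      _ ≤ 1 * ((x + 1) / x) ^ r :=
          mul_le_mul_of_nonneg_right key (le_of_lt (rpow_pos_of_pos (by positivity) r))
      _ = ((x + 1) / x) ^ r := one_mul _

/-- Pointwise bound, decreasing case: for `p > 1`, `1 ≤ x`. -/
lemma ptwise_dec {p x : ℝ} (hp : 1 < p) (hx : 1 ≤ x) :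
    (p - 1) * 2 ^ (-p) * x ^ (-p) ≤ x ^ (1 - p) - (x + 1) ^ (1 - p) := by
  have hx0 : 0 < x := lt_of_lt_of_le one_pos hx
  have hx1 : 0 < x + 1 := by linarith
  have hb := bern_aux (r := p - 1) (by linarith) hx
  have hmul := mul_le_mul_of_nonneg_right hb
    (le_of_lt (Real.rpow_pos_of_pos hx1 (1 - p)))
  have hR : ((x + 1) / x) ^ (p - 1) * (x + 1) ^ (1 - p) = x ^ (1 - p) := by
    rw [Real.div_rpow hx1.le hx0.le, div_mul_eq_mul_div, ← Real.rpow_add hx1,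
      show p - 1 + (1 - p) = 0 by ring, Real.rpow_zero, one_div,
      ← Real.rpow_neg hx0.le, show -(p - 1) = 1 - p by ring]
  have h3 : (x + 1) ^ (-p) = (x + 1) ^ (1 - p) / (x + 1) := by
    rw [show -p = (1 - p) - 1 by ring, Real.rpow_sub hx1, Real.rpow_one]
  have hL : (1 + (p - 1) / (x + 1)) * (x + 1) ^ (1 - p)
      = (x + 1) ^ (1 - p) + (p - 1) * (x + 1) ^ (-p) := by
    rw [add_mul, one_mul, div_mul_eq_mul_div, mul_div_assoc, ← h3]
  rw [hR, hL] at hmul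
  have h4 : 2 ^ (-p) * x ^ (-p) ≤ (x + 1) ^ (-p) := by
    rw [← Real.mul_rpow (by norm_num) hx0.le]
    exact Real.rpow_le_rpow_of_nonpos hx1 (by linarith) (by linarith)
  nlinarith [h4, hmul, sub_pos.mpr hp]

/-- Pointwise bound, increasing case: for `p < 1`, `1 ≤ x`. -/
lemma ptwise_inc {p x : ℝ} (hp : p < 1) (hx : 1 ≤ x) :
    (1 - p) / 2 * x ^ (-p) ≤ (x + 1) ^ (1 - p) - x ^ (1 - p) := by
  have hx0 : 0 < x := lt_of_lt_of_le one_pos hx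
  have hx1 : 0 < x + 1 := by linarith
  have hb := bern_aux (r := 1 - p) (by linarith) hx
  have hmul := mul_le_mul_of_nonneg_right hb
    (le_of_lt (Real.rpow_pos_of_pos hx0 (1 - p)))
  have hR : ((x + 1) / x) ^ (1 - p) * x ^ (1 - p) = (x + 1) ^ (1 - p) := by
    rw [Real.div_rpow hx1.le hx0.le, div_mul_cancel₀]
    exact ne_of_gt (Real.rpow_pos_of_pos hx0 _)
  have hsplit : x * x ^ (-p) = x ^ (1 - p) := by
    nth_rewrite 1 [← Real.rpow_one x]
    rw [← Real.rpow_add hx0, show (1:ℝ) + -p = 1 - p by ring]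
  have hL : (1 + (1 - p) / (x + 1)) * x ^ (1 - p)
      = x ^ (1 - p) + (1 - p) * (x ^ (1 - p) / (x + 1)) := by ring
  rw [hR, hL] at hmul
  have h4 : x ^ (-p) / 2 ≤ x ^ (1 - p) / (x + 1) := by
    rw [← hsplit, div_le_div_iff₀ (by norm_num) hx1]
    have hnn : 0 ≤ x ^ (-p) := le_of_lt (Real.rpow_pos_of_pos hx0 _)
    nlinarith
  nlinarith [hmul, h4]

/-- Telescoping: sum of `a n - a (n+1)` over a finite set of indices `≥ m`. -/
lemma tele_dec (a : ℕ → ℝ) (ha0 : ∀ n, 0 ≤ a n) (hmono : ∀ n, a (n + 1) ≤ a n)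
    (m : ℕ) (S : Finset ℕ) (hS : ∀ n ∈ S, m ≤ n) :
    ∑ n ∈ S, (a n - a (n + 1)) ≤ a m := by
  classical
  rcases S.eq_empty_or_nonempty with rfl | hne
  · simpa using ha0 m
  set N := S.sup id with hN
  have hmN : m ≤ N := by
    obtain ⟨k, hk⟩ := hne
    exact le_trans (hS k hk) (Finset.le_sup (f := id) hk)
  have hsub : S ⊆ Finset.Ico m (N + 1) := by
    intro n hn
    exact Finset.mem_Ico.2 ⟨hS n hn, Nat.lt_succ_of_le (Finset.le_sup (f := id) hn)⟩
  calc ∑ n ∈ S, (a n - a (n + 1))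
      ≤ ∑ n ∈ Finset.Ico m (N + 1), (a n - a (n + 1)) :=
        Finset.sum_le_sum_of_subset_of_nonneg hsub
          (fun i _ _ => sub_nonneg.2 (hmono i))
    _ = (∑ n ∈ Finset.range (N + 1), (a n - a (n + 1)))
        - ∑ n ∈ Finset.range m, (a n - a (n + 1)) :=
        Finset.sum_Ico_eq_sub _ (by omega)
    _ = (a 0 - a (N + 1)) - (a 0 - a m) := by
        rw [Finset.sum_range_sub' a, Finset.sum_range_sub' a]
    _ = a m - a (N + 1) := by ring
    _ ≤ a m := by linarith [ha0 (N + 1)]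

/-- Telescoping: sum of `b (n+1) - b n` over a finite set of indices `≤ m`. -/
lemma tele_inc (b : ℕ → ℝ) (hb0 : 0 ≤ b 0) (hmono : ∀ n, b n ≤ b (n + 1))
    (m : ℕ) (S : Finset ℕ) (hS : ∀ n ∈ S, n ≤ m) :
    ∑ n ∈ S, (b (n + 1) - b n) ≤ b (m + 1) := by
  classical
  have hsub : S ⊆ Finset.range (m + 1) := fun n hn =>
    Finset.mem_range.2 (Nat.lt_succ_of_le (hS n hn))
  calc ∑ n ∈ S, (b (n + 1) - b n)
      ≤ ∑ n ∈ Finset.range (m + 1), (b (n + 1) - b n) :=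
        Finset.sum_le_sum_of_subset_of_nonneg hsub
          (fun i _ _ => sub_nonneg.2 (hmono i))
    _ = b (m + 1) - b 0 := Finset.sum_range_sub b (m + 1)
    _ ≤ b (m + 1) := by linarith

/-- Sum of `(n+1)^(-p)` over indices `≥ m` when `p > 1`. -/
lemma dec_sum {p : ℝ} (hp : 1 < p) (m : ℕ) (S : Finset ℕ) (hS : ∀ n ∈ S, m ≤ n) :
    ∑ n ∈ S, ((n : ℝ) + 1) ^ (-p) ≤ 2 ^ p / (p - 1) * ((m : ℝ) + 1) ^ (1 - p) := by
  have hp1 : (0:ℝ) < p - 1 := by linarith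
  have h2p : (0:ℝ) < (2:ℝ) ^ p := Real.rpow_pos_of_pos two_pos _
  have hcpos : (0:ℝ) < 2 ^ p / (p - 1) := div_pos h2p hp1
  set a : ℕ → ℝ := fun n => ((n : ℝ) + 1) ^ (1 - p) with haa
  have ha : ∀ n, a n = ((n : ℝ) + 1) ^ (1 - p) := fun n => rfl
  have hcast : ∀ n : ℕ, a (n + 1) = (((n:ℝ) + 1) + 1) ^ (1 - p) := by
    intro n; rw [ha]; push_cast; ring_nf
  have ha0 : ∀ n, 0 ≤ a n := fun n => le_of_lt (Real.rpow_pos_of_pos (by positivity) _)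
  have hmono : ∀ n, a (n + 1) ≤ a n := by
    intro n
    rw [hcast, ha]
    exact Real.rpow_le_rpow_of_nonpos (by positivity) (by linarith) (by linarith)
  have key : ∀ n : ℕ, ((n : ℝ) + 1) ^ (-p) ≤ (2 ^ p / (p - 1)) * (a n - a (n + 1)) := by
    intro n
    have h := ptwise_dec hp (one_le_cast_succ n)
    rw [ha, hcast, div_mul_eq_mul_div, le_div_iff₀ hp1]
    have hmul2 := mul_le_mul_of_nonneg_left h h2p.le
    have h2p' : (2:ℝ) ^ p * (2:ℝ) ^ (-p) = 1 := by
      rw [← Real.rpow_add two_pos]; simp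
    have hid : (2:ℝ) ^ p * ((p - 1) * 2 ^ (-p) * (((n:ℝ) + 1) ^ (-p)))
        = ((n:ℝ) + 1) ^ (-p) * (p - 1) := by
      linear_combination ((p - 1) * (((n:ℝ) + 1) ^ (-p))) * h2p'
    nlinarith [hmul2, hid]
  calc ∑ n ∈ S, ((n : ℝ) + 1) ^ (-p)
      ≤ ∑ n ∈ S, (2 ^ p / (p - 1)) * (a n - a (n + 1)) :=
        Finset.sum_le_sum (fun n _ => key n)
    _ = (2 ^ p / (p - 1)) * ∑ n ∈ S, (a n - a (n + 1)) := by rw [Finset.mul_sum]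
    _ ≤ (2 ^ p / (p - 1)) * a m :=
        mul_le_mul_of_nonneg_left (tele_dec a ha0 hmono m S hS) hcpos.le
    _ = 2 ^ p / (p - 1) * ((m : ℝ) + 1) ^ (1 - p) := by rw [ha]

/-- Sum of `(n+1)^(-p)` over indices `≤ m` when `p < 1`. -/
lemma inc_sum {p : ℝ} (hp : p < 1) (m : ℕ) (S : Finset ℕ) (hS : ∀ n ∈ S, n ≤ m) :
    ∑ n ∈ S, ((n : ℝ) + 1) ^ (-p) ≤ 2 ^ (2 - p) / (1 - p) * ((m : ℝ) + 1) ^ (1 - p) := by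
  have hp1 : (0:ℝ) < 1 - p := by linarith
  set b : ℕ → ℝ := fun n => ((n : ℝ) + 1) ^ (1 - p) with hbb
  have hb : ∀ n, b n = ((n : ℝ) + 1) ^ (1 - p) := fun n => rfl
  have hcast : ∀ n : ℕ, b (n + 1) = (((n:ℝ) + 1) + 1) ^ (1 - p) := by
    intro n; rw [hb]; push_cast; ring_nf
  have hb0 : 0 ≤ b 0 := le_of_lt (Real.rpow_pos_of_pos (by norm_num) _)
  have hmono : ∀ n, b n ≤ b (n + 1) := by
    intro n
    rw [hcast, hb]
    exact Real.rpow_le_rpow (by positivity) (by linarith) (by linarith)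
  have key : ∀ n : ℕ, ((n : ℝ) + 1) ^ (-p) ≤ (2 / (1 - p)) * (b (n + 1) - b n) := by
    intro n
    have h := ptwise_inc hp (one_le_cast_succ n)
    rw [hcast, hb, div_mul_eq_mul_div, le_div_iff₀ hp1]
    nlinarith [h]
  have htel := tele_inc b hb0 hmono m S hS
  have hb1 : b (m + 1) ≤ 2 ^ (1 - p) * ((m : ℝ) + 1) ^ (1 - p) := by
    rw [hcast, ← Real.mul_rpow (by norm_num) (by positivity)]
    apply Real.rpow_le_rpow (by positivity) (by linarith) (by linarith)
  have hc2 : (0:ℝ) < 2 / (1 - p) := by positivity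
  calc ∑ n ∈ S, ((n : ℝ) + 1) ^ (-p)
      ≤ ∑ n ∈ S, (2 / (1 - p)) * (b (n + 1) - b n) :=
        Finset.sum_le_sum (fun n _ => key n)
    _ = (2 / (1 - p)) * ∑ n ∈ S, (b (n + 1) - b n) := by rw [Finset.mul_sum]
    _ ≤ (2 / (1 - p)) * b (m + 1) := mul_le_mul_of_nonneg_left htel hc2.le
    _ ≤ (2 / (1 - p)) * (2 ^ (1 - p) * ((m : ℝ) + 1) ^ (1 - p)) :=
        mul_le_mul_of_nonneg_left hb1 hc2.le
    _ = 2 ^ (2 - p) / (1 - p) * ((m : ℝ) + 1) ^ (1 - p) := by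
        rw [show (2:ℝ) ^ (2 - p) = 2 ^ (1:ℝ) * 2 ^ (1 - p) by
          rw [← Real.rpow_add two_pos]; ring_nf, Real.rpow_one]
        ring


noncomputable def Ahat (s : ℝ) (m n : ℕ) : ℝ :=
  if m ≤ n then ((m : ℝ) + 1) ^ (s - 1) * ((n : ℝ) + 1) ^ (-s)
    else ((m : ℝ) + 1) ^ (-1 : ℝ)

noncomputable def wgt (n : ℕ) : ℝ := ((n : ℝ) + 1) ^ (-(1/2 : ℝ))

noncomputable def Kr (s : ℝ) : ℝ :=
  2 ^ (s + 1/2) / (s + 1/2 - 1) + 2 ^ (2 - (1/2 : ℝ)) / (1 - (1/2 : ℝ))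

noncomputable def Kc (s : ℝ) : ℝ :=
  2 ^ (2 - (3/2 - s)) / (1 - (3/2 - s)) + 2 ^ ((3 : ℝ)/2) / ((3 : ℝ)/2 - 1)

lemma Ahat_nonneg (s : ℝ) (m n : ℕ) : 0 ≤ Ahat s m n := by
  unfold Ahat; split <;> positivity

lemma wgt_pos (n : ℕ) : 0 < wgt n := Real.rpow_pos_of_pos (by positivity) _

lemma Kr_pos {s : ℝ} (hs0 : 1/2 < s) : 0 < Kr s := by
  unfold Kr
  have h1 : (0:ℝ) < 2 ^ (s + 1/2) := Real.rpow_pos_of_pos two_pos _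
  have h2 : (0:ℝ) < 2 ^ (2 - (1/2 : ℝ)) := Real.rpow_pos_of_pos two_pos _
  have := div_pos h1 (by linarith : (0:ℝ) < s + 1/2 - 1)
  have := div_pos h2 (by norm_num : (0:ℝ) < 1 - (1/2 : ℝ))
  linarith

lemma Kc_pos {s : ℝ} (hs0 : 1/2 < s) : 0 < Kc s := by
  unfold Kc
  have h1 : (0:ℝ) < 2 ^ (2 - (3/2 - s)) := Real.rpow_pos_of_pos two_pos _
  have h2 : (0:ℝ) < 2 ^ ((3 : ℝ)/2) := Real.rpow_pos_of_pos two_pos _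
  have := div_pos h1 (by linarith : (0:ℝ) < 1 - (3/2 - s))
  have := div_pos h2 (by norm_num : (0:ℝ) < (3:ℝ)/2 - 1)
  linarith

lemma row_bd (s : ℝ) (hs0 : 1/2 < s) (m : ℕ) (F : Finset ℕ) :
    ∑ n ∈ F, Ahat s m n * wgt n ≤ Kr s * wgt m := by
  classical
  have hw : ∀ k : ℕ, (0:ℝ) < (k:ℝ) + 1 := fun k => by positivity
  rw [← Finset.sum_filter_add_sum_filter_not F (fun n => m ≤ n)]
  have e1 : ∑ n ∈ F.filter (fun n => m ≤ n), Ahat s m n * wgt n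
      = ((m:ℝ)+1) ^ (s-1) * ∑ n ∈ F.filter (fun n => m ≤ n), ((n:ℝ)+1) ^ (-(s+1/2)) := by
    rw [Finset.mul_sum]
    refine Finset.sum_congr rfl (fun n hn => ?_)
    obtain ⟨-, hmn⟩ := Finset.mem_filter.1 hn
    simp only [Ahat, wgt, if_pos hmn]
    rw [mul_assoc, ← Real.rpow_add (hw n), show -s + -(1/2:ℝ) = -(s+1/2) by ring]
  have e2 : ∑ n ∈ F.filter (fun n => ¬ m ≤ n), Ahat s m n * wgt n
      = ((m:ℝ)+1) ^ (-1:ℝ) * ∑ n ∈ F.filter (fun n => ¬ m ≤ n), ((n:ℝ)+1) ^ (-(1/2:ℝ)) := by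
    rw [Finset.mul_sum]
    refine Finset.sum_congr rfl (fun n hn => ?_)
    obtain ⟨-, hmn⟩ := Finset.mem_filter.1 hn
    simp only [Ahat, wgt, if_neg hmn]
  have b1 := dec_sum (p := s + 1/2) (by linarith) m (F.filter (fun n => m ≤ n))
    (fun n hn => (Finset.mem_filter.1 hn).2)
  have b2 := inc_sum (p := (1/2 : ℝ)) (by norm_num) m (F.filter (fun n => ¬ m ≤ n))
    (fun n hn => by have := (Finset.mem_filter.1 hn).2; omega)
  have h1 : ∑ n ∈ F.filter (fun n => m ≤ n), Ahat s m n * wgt n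
      ≤ 2 ^ (s + 1/2) / (s + 1/2 - 1) * wgt m := by
    rw [e1]
    calc ((m:ℝ)+1) ^ (s-1) * ∑ n ∈ F.filter (fun n => m ≤ n), ((n:ℝ)+1) ^ (-(s+1/2))
        ≤ ((m:ℝ)+1) ^ (s-1) * (2 ^ (s+1/2) / (s+1/2-1) * ((m:ℝ)+1) ^ (1-(s+1/2))) :=
          mul_le_mul_of_nonneg_left b1 (le_of_lt (Real.rpow_pos_of_pos (hw m) _))
      _ = 2 ^ (s + 1/2) / (s + 1/2 - 1) * wgt m := by
          rw [mul_comm, mul_assoc, ← Real.rpow_add (hw m),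
            show 1 - (s+1/2) + (s-1) = -(1/2:ℝ) by ring, wgt]
  have h2 : ∑ n ∈ F.filter (fun n => ¬ m ≤ n), Ahat s m n * wgt n
      ≤ 2 ^ (2 - (1/2 : ℝ)) / (1 - (1/2 : ℝ)) * wgt m := by
    rw [e2]
    calc ((m:ℝ)+1) ^ (-1:ℝ) * ∑ n ∈ F.filter (fun n => ¬ m ≤ n), ((n:ℝ)+1) ^ (-(1/2:ℝ))
        ≤ ((m:ℝ)+1) ^ (-1:ℝ) * (2 ^ (2-(1/2:ℝ)) / (1-(1/2:ℝ)) * ((m:ℝ)+1) ^ (1-(1/2:ℝ))) :=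
          mul_le_mul_of_nonneg_left b2 (le_of_lt (Real.rpow_pos_of_pos (hw m) _))
      _ = 2 ^ (2 - (1/2 : ℝ)) / (1 - (1/2 : ℝ)) * wgt m := by
          rw [mul_comm, mul_assoc, ← Real.rpow_add (hw m),
            show 1 - (1/2:ℝ) + -1 = -(1/2:ℝ) by norm_num, wgt]
  calc (∑ n ∈ F.filter (fun n => m ≤ n), Ahat s m n * wgt n)
        + ∑ n ∈ F.filter (fun n => ¬ m ≤ n), Ahat s m n * wgt n
      ≤ 2 ^ (s + 1/2) / (s + 1/2 - 1) * wgt m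
        + 2 ^ (2 - (1/2 : ℝ)) / (1 - (1/2 : ℝ)) * wgt m := add_le_add h1 h2
    _ = Kr s * wgt m := by rw [Kr]; ring

lemma col_bd (s : ℝ) (hs0 : 1/2 < s) (n : ℕ) (M : Finset ℕ) :
    ∑ m ∈ M, Ahat s m n * wgt m ≤ Kc s * wgt n := by
  classical
  have hw : ∀ k : ℕ, (0:ℝ) < (k:ℝ) + 1 := fun k => by positivity
  rw [← Finset.sum_filter_add_sum_filter_not M (fun m => m ≤ n)]
  have e1 : ∑ m ∈ M.filter (fun m => m ≤ n), Ahat s m n * wgt m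
      = ((n:ℝ)+1) ^ (-s) * ∑ m ∈ M.filter (fun m => m ≤ n), ((m:ℝ)+1) ^ (-(3/2-s)) := by
    rw [Finset.mul_sum]
    refine Finset.sum_congr rfl (fun m hm => ?_)
    obtain ⟨-, hmn⟩ := Finset.mem_filter.1 hm
    simp only [Ahat, wgt, if_pos hmn]
    have hkey : ((m:ℝ)+1) ^ (s-1) * ((m:ℝ)+1) ^ (-(1/2:ℝ)) = ((m:ℝ)+1) ^ (-(3/2-s)) := by
      rw [← Real.rpow_add (hw m), show s - 1 + -(1/2:ℝ) = -(3/2-s) by ring]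
    rw [mul_right_comm, hkey, mul_comm]
  have e2 : ∑ m ∈ M.filter (fun m => ¬ m ≤ n), Ahat s m n * wgt m
      = ∑ m ∈ M.filter (fun m => ¬ m ≤ n), ((m:ℝ)+1) ^ (-((3:ℝ)/2)) := by
    refine Finset.sum_congr rfl (fun m hm => ?_)
    obtain ⟨-, hmn⟩ := Finset.mem_filter.1 hm
    simp only [Ahat, wgt, if_neg hmn]
    rw [← Real.rpow_add (hw m), show (-1:ℝ) + -(1/2:ℝ) = -((3:ℝ)/2) by norm_num]
  have b1 := inc_sum (p := 3/2 - s) (by linarith) n (M.filter (fun m => m ≤ n))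
    (fun m hm => (Finset.mem_filter.1 hm).2)
  have b2 := dec_sum (p := (3:ℝ)/2) (by norm_num) (n+1) (M.filter (fun m => ¬ m ≤ n))
    (fun m hm => by have := (Finset.mem_filter.1 hm).2; omega)
  have h1 : ∑ m ∈ M.filter (fun m => m ≤ n), Ahat s m n * wgt m
      ≤ 2 ^ (2 - (3/2 - s)) / (1 - (3/2 - s)) * wgt n := by
    rw [e1]
    calc ((n:ℝ)+1) ^ (-s) * ∑ m ∈ M.filter (fun m => m ≤ n), ((m:ℝ)+1) ^ (-(3/2-s))
        ≤ ((n:ℝ)+1) ^ (-s) * (2 ^ (2-(3/2-s)) / (1-(3/2-s)) * ((n:ℝ)+1) ^ (1-(3/2-s))) :=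
          mul_le_mul_of_nonneg_left b1 (le_of_lt (Real.rpow_pos_of_pos (hw n) _))
      _ = 2 ^ (2 - (3/2 - s)) / (1 - (3/2 - s)) * wgt n := by
          rw [mul_comm, mul_assoc, ← Real.rpow_add (hw n),
            show 1 - (3/2-s) + -s = -(1/2:ℝ) by ring, wgt]
  have h2 : ∑ m ∈ M.filter (fun m => ¬ m ≤ n), Ahat s m n * wgt m
      ≤ 2 ^ ((3:ℝ)/2) / ((3:ℝ)/2 - 1) * wgt n := by
    rw [e2]
    have hshift : (((n+1 : ℕ):ℝ) + 1) ^ (1 - (3:ℝ)/2) ≤ wgt n := by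
      push_cast
      rw [show (1:ℝ) - (3:ℝ)/2 = -(1/2:ℝ) by norm_num, wgt]
      exact Real.rpow_le_rpow_of_nonpos (hw n) (by linarith) (by norm_num)
    calc ∑ m ∈ M.filter (fun m => ¬ m ≤ n), ((m:ℝ)+1) ^ (-((3:ℝ)/2))
        ≤ 2 ^ ((3:ℝ)/2) / ((3:ℝ)/2 - 1) * (((n+1 : ℕ):ℝ) + 1) ^ (1 - (3:ℝ)/2) := b2
      _ ≤ 2 ^ ((3:ℝ)/2) / ((3:ℝ)/2 - 1) * wgt n := by
          apply mul_le_mul_of_nonneg_left hshift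
          have : (0:ℝ) < 2 ^ ((3:ℝ)/2) := Real.rpow_pos_of_pos two_pos _
          have : (0:ℝ) < (3:ℝ)/2 - 1 := by norm_num
          positivity
  calc (∑ m ∈ M.filter (fun m => m ≤ n), Ahat s m n * wgt m)
        + ∑ m ∈ M.filter (fun m => ¬ m ≤ n), Ahat s m n * wgt m
      ≤ 2 ^ (2 - (3/2 - s)) / (1 - (3/2 - s)) * wgt n
        + 2 ^ ((3:ℝ)/2) / ((3:ℝ)/2 - 1) * wgt n := add_le_add h1 h2
    _ = Kc s * wgt n := by rw [Kc]; ring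

lemma schur (s : ℝ) (hs0 : 1/2 < s) (x : ℕ → ℝ) (F M : Finset ℕ) :
    ∑ m ∈ M, (∑ n ∈ F, Ahat s m n * x n) ^ 2 ≤ (Kr s * Kc s) * ∑ n ∈ F, x n ^ 2 := by
  classical
  have hKr := Kr_pos hs0
  have hKc := Kc_pos hs0
  have hw := wgt_pos
  have step : ∀ m, (∑ n ∈ F, Ahat s m n * x n) ^ 2
      ≤ (Kr s * wgt m) * ∑ n ∈ F, Ahat s m n * x n ^ 2 / wgt n := by
    intro m
    have hg : ∀ n ∈ F, 0 ≤ Ahat s m n * x n ^ 2 / wgt n := fun n _ =>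
      div_nonneg (mul_nonneg (Ahat_nonneg _ _ _) (sq_nonneg _)) (hw n).le
    have CS := Finset.sum_sq_le_sum_mul_sum_of_sq_eq_mul F
      (f := fun n => Ahat s m n * wgt n) (g := fun n => Ahat s m n * x n ^ 2 / wgt n)
      (r := fun n => Ahat s m n * x n)
      (fun n _ => mul_nonneg (Ahat_nonneg _ _ _) (hw n).le) hg
      (fun n _ => by field_simp [(hw n).ne'])
    calc (∑ n ∈ F, Ahat s m n * x n) ^ 2
        ≤ (∑ n ∈ F, Ahat s m n * wgt n) * ∑ n ∈ F, Ahat s m n * x n ^ 2 / wgt n := CS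
      _ ≤ (Kr s * wgt m) * ∑ n ∈ F, Ahat s m n * x n ^ 2 / wgt n :=
          mul_le_mul_of_nonneg_right (row_bd s hs0 m F) (Finset.sum_nonneg hg)
  calc ∑ m ∈ M, (∑ n ∈ F, Ahat s m n * x n) ^ 2
      ≤ ∑ m ∈ M, (Kr s * wgt m) * ∑ n ∈ F, Ahat s m n * x n ^ 2 / wgt n :=
        Finset.sum_le_sum (fun m _ => step m)
    _ = ∑ n ∈ F, (Kr s * (x n ^ 2 / wgt n)) * ∑ m ∈ M, Ahat s m n * wgt m := by
        simp_rw [Finset.mul_sum]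
        rw [Finset.sum_comm]
        refine Finset.sum_congr rfl (fun n _ => Finset.sum_congr rfl (fun m _ => by ring))
    _ ≤ ∑ n ∈ F, (Kr s * (x n ^ 2 / wgt n)) * (Kc s * wgt n) :=
        Finset.sum_le_sum (fun n _ => mul_le_mul_of_nonneg_left (col_bd s hs0 n M)
          (mul_nonneg hKr.le (div_nonneg (sq_nonneg _) (hw n).le)))
    _ = (Kr s * Kc s) * ∑ n ∈ F, x n ^ 2 := by
        rw [Finset.mul_sum]
        refine Finset.sum_congr rfl (fun n _ => ?_)
        field_simp [(hw n).ne']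

theorem stmt5 (s : ℝ) (hs0 : 1 / 2 < s) (hs : s ≤ 2) :
    ∃ C > 0, ∀ x : ℕ → ℝ, ∀ hx : (Function.support x).Finite, (∀ n, 0 ≤ x n) →
      ∀ M : Finset ℕ,
        ∑ m ∈ M, (∑ n ∈ hx.toFinset,
            (if m ≤ n then ((m : ℝ) + 1) ^ (s - 1) * ((n : ℝ) + 1) ^ (-s)
              else ((m : ℝ) + 1) ^ (-1 : ℝ)) * x n) ^ 2
          ≤ C * ∑ n ∈ hx.toFinset, (x n) ^ 2 := by
  refine ⟨Kr s * Kc s, mul_pos (Kr_pos hs0) (Kc_pos hs0), ?_⟩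
  intro x hx hx0 M
  exact schur s hs0 x hx.toFinset M
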